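/- Let p be monic of degree 9 with zeros a, z_1,…,z_8 and critical points ζ_1,…,ζ_8 satisfying |ζ_j − a| ≥ 1 for all j. Writing r_k = |z_k − a|, one has ∏_{j=1}^{8}|ζ_j| ≤ (∏_{j=1}^{8}|ζ_j − a|)·(a² − 1 + (1/4)∑_{k=1}^{8}(|z_k|² − a²)/r_k²)⁴, provided the quantity a² − 1 + (1/4)∑_{k=1}^{8}(|z_k|² − a²)/r_k² is nonnegative. -/

import Mathlib

open Polynomial Finset

theorem stmt_19 (a : ℝ) (ha0 : 0 < a) (ha1 : a < 1)
    (z ζ : Fin 8 → ℂ) (p : Polynomial ℂ)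
    (hp : p = (X - C (a : ℂ)) * ∏ k, (X - C (z k)))
    (hp' : derivative p = C (9 : ℂ) * ∏ j, (X - C (ζ j)))
    (hzne : ∀ k, z k ≠ (a : ℂ))
    (hζ : ∀ j, 1 ≤ ‖ζ j - a‖)
    (r : Fin 8 → ℝ) (hr : ∀ k, r k = ‖z k - a‖)
    (hpos : 0 ≤ a ^ 2 - 1 + (1 / 4) * ∑ k, (‖z k‖ ^ 2 - a ^ 2) / (r k) ^ 2) :
    (∏ j, ‖ζ j‖) ≤
      (∏ j, ‖ζ j - a‖) *
        (a ^ 2 - 1 + (1 / 4) * ∑ k, (‖z k‖ ^ 2 - a ^ 2) / (r k) ^ 2) ^ 4 := by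
  have hζne : ∀ j, ζ j ≠ (a : ℂ) := by
    intro j h
    have := hζ j
    rw [h, sub_self] at this
    simp at this
    linarith
  have hζ0 : ∀ j, ((a : ℂ) - ζ j) ≠ 0 := fun j => sub_ne_zero.mpr (Ne.symm (hζne j))
  have hz0 : ∀ k, ((a : ℂ) - z k) ≠ 0 := fun k => sub_ne_zero.mpr (Ne.symm (hzne k))
  have hP0 : (∏ j, ((a : ℂ) - ζ j)) ≠ 0 := Finset.prod_ne_zero_iff.mpr fun j _ => hζ0 j
  have hQ0 : (∏ k, ((a : ℂ) - z k)) ≠ 0 := Finset.prod_ne_zero_iff.mpr fun k _ => hz0 k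
  -- derivative of the product polynomial, evaluated at a
  have hprodder : ∀ (s : Finset (Fin 8)) (w : Fin 8 → ℂ),
      eval (a : ℂ) (derivative (∏ i ∈ s, (X - C (w i)))) =
        ∑ j ∈ s, ∏ i ∈ s.erase j, ((a : ℂ) - w i) := by
    intro s w
    induction s using Finset.induction_on with
    | empty => simp
    | @insert c s' hc ih =>
      rw [Finset.prod_insert hc, derivative_mul]
      simp only [derivative_sub, derivative_X, derivative_C, sub_zero, one_mul]
      rw [eval_add, eval_mul]
      simp only [eval_sub, eval_X, eval_C]
      rw [ih, Finset.sum_insert hc, Finset.erase_insert hc, eval_prod]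
      simp only [eval_sub, eval_X, eval_C]
      have hstep : ∀ j ∈ s', ∏ i ∈ (insert c s').erase j, ((a : ℂ) - w i)
          = ((a : ℂ) - w c) * ∏ i ∈ s'.erase j, ((a : ℂ) - w i) := by
        intro j hj
        have hjc : c ≠ j := fun h => hc (h ▸ hj)
        rw [Finset.erase_insert_of_ne hjc,
          Finset.prod_insert (fun h => hc (Finset.mem_of_mem_erase h))]
      rw [Finset.sum_congr rfl hstep, ← Finset.mul_sum]
  -- erase-product identity
  have herase : ∀ (w : Fin 8 → ℂ), (∀ i, ((a:ℂ) - w i) ≠ 0) →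
      ∑ j, ∏ i ∈ univ.erase j, ((a : ℂ) - w i) =
        (∏ i, ((a:ℂ) - w i)) * ∑ j, ((a:ℂ) - w j)⁻¹ := by
    intro w hw
    rw [Finset.mul_sum]
    refine Finset.sum_congr rfl fun j _ => ?_
    have h := Finset.mul_prod_erase univ (fun i => (a:ℂ) - w i) (Finset.mem_univ j)
    rw [← h, mul_comm ((a:ℂ) - w j), mul_assoc, mul_inv_cancel₀ (hw j), mul_one]
  set q : Polynomial ℂ := ∏ k, (X - C (z k)) with hqdef
  have hd1 : derivative p = q + (X - C (a : ℂ)) * derivative q := by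
    rw [hp, derivative_mul]
    simp
  have heval1 : eval (a : ℂ) (derivative p) = ∏ k, ((a : ℂ) - z k) := by
    rw [hd1]
    simp [hqdef, eval_prod]
  have heval1' : eval (a : ℂ) (derivative p) = 9 * ∏ j, ((a : ℂ) - ζ j) := by
    rw [hp']
    simp [eval_prod]
  have hQP : (∏ k, ((a : ℂ) - z k)) = 9 * ∏ j, ((a : ℂ) - ζ j) := by
    rw [← heval1, heval1']
  have hd2 : derivative (derivative p) =
      2 * derivative q + (X - C (a : ℂ)) * derivative (derivative q) := by
    rw [hd1, derivative_add, derivative_mul]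
    simp only [derivative_sub, derivative_X, derivative_C, sub_zero, one_mul]
    ring
  set A : ℂ := ∑ j, ((a:ℂ) - ζ j)⁻¹ with hAdef
  set B : ℂ := ∑ k, ((a:ℂ) - z k)⁻¹ with hBdef
  have heval2 : eval (a : ℂ) (derivative (derivative p))
      = 2 * ((∏ k, ((a:ℂ) - z k)) * B) := by
    rw [hd2]
    simp only [eval_add, eval_mul, eval_sub, eval_X, eval_C, sub_self, zero_mul, add_zero,
      eval_ofNat]
    rw [hqdef, hprodder, herase z hz0]
  have heval2' : eval (a : ℂ) (derivative (derivative p))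
      = 9 * ((∏ j, ((a:ℂ) - ζ j)) * A) := by
    rw [hp', derivative_mul]
    simp only [derivative_C, zero_mul, zero_add, eval_mul, eval_C]
    rw [hprodder, herase ζ hζ0]
  have hAB : A = 2 * B := by
    have h1 : (9 : ℂ) * (∏ j, ((a:ℂ) - ζ j)) * A
        = (9 : ℂ) * (∏ j, ((a:ℂ) - ζ j)) * (2 * B) := by
      have h := heval2.symm.trans heval2'
      rw [hQP] at h
      linear_combination -h
    exact mul_left_cancel₀ (mul_ne_zero (by norm_num) hP0) h1
  -- key pointwise real identity
  have key : ∀ w : ℂ, w ≠ (a : ℂ) →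
      (‖w‖ ^ 2 - a ^ 2) / (‖w - a‖) ^ 2 =
        1 - 2 * a * (((a : ℂ) - w)⁻¹).re := by
    intro w hw
    have hD0 : w - (a : ℂ) ≠ 0 := sub_ne_zero.mpr hw
    have hD : 0 < (w.re - a) ^ 2 + w.im ^ 2 := by
      have h := Complex.normSq_pos.mpr hD0
      have hns : Complex.normSq (w - (a : ℂ)) = (w.re - a) ^ 2 + w.im ^ 2 := by
        simp [Complex.normSq_apply]
        ring
      linarith [hns ▸ h]
    have h1 : ‖w - (a : ℂ)‖ ^ 2 = (w.re - a) ^ 2 + w.im ^ 2 := by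
      rw [Complex.sq_norm]
      simp [Complex.normSq_apply]
      ring
    have h2 : ‖w‖ ^ 2 = w.re ^ 2 + w.im ^ 2 := by
      rw [Complex.sq_norm]
      simp [Complex.normSq_apply]
      ring
    have h3 : (((a : ℂ) - w)⁻¹).re = (a - w.re) / ((w.re - a) ^ 2 + w.im ^ 2) := by
      rw [Complex.inv_re]
      simp [Complex.normSq_apply]
      ring
    rw [h1, h2, h3]
    field_simp
    ring
  have hreA : A.re = ∑ j, (((a:ℂ) - ζ j)⁻¹).re := by
    rw [hAdef]; exact Complex.re_sum _ _
  have hreB : B.re = ∑ k, (((a:ℂ) - z k)⁻¹).re := by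
    rw [hBdef]; exact Complex.re_sum _ _
  set T : ℝ := ∑ k, (‖z k‖ ^ 2 - a ^ 2) / (r k) ^ 2 with hTdef
  set S : ℝ := a ^ 2 - 1 + (1 / 4) * T with hSdef
  have hTalt : T = ∑ k, (‖z k‖ ^ 2 - a ^ 2) / (‖z k - a‖) ^ 2 := by
    refine Finset.sum_congr rfl fun k _ => ?_
    rw [hr k]
  have hTB : T = 8 - 2 * a * B.re := by
    rw [hTalt, Finset.sum_congr rfl fun k _ => key (z k) (hzne k), hreB,
      Finset.sum_sub_distrib, Finset.mul_sum]
    simp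
  have hsumζ : (∑ j, (‖ζ j‖ ^ 2 - a ^ 2) / (‖ζ j - a‖) ^ 2)
      = 2 * T - 8 := by
    have hA2B : A.re = 2 * B.re := by rw [hAB]; simp
    have h4 : (∑ j, (‖ζ j‖ ^ 2 - a ^ 2) / (‖ζ j - a‖) ^ 2)
        = 8 - 2 * a * A.re := by
      rw [Finset.sum_congr rfl fun j _ => key (ζ j) (hζne j), hreA,
        Finset.sum_sub_distrib, Finset.mul_sum]
      simp
    rw [h4, hA2B]
    linarith [hTB]
  set t : Fin 8 → ℝ := fun j => (‖ζ j‖) ^ 2 / (‖ζ j - a‖) ^ 2 with htdef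
  have hρpos : ∀ j, 0 < ‖ζ j - a‖ := fun j => lt_of_lt_of_le one_pos (hζ j)
  have htnonneg : ∀ j, 0 ≤ t j := fun j => by positivity
  have htsum : ∑ j, t j ≤ 8 * S := by
    have hle : ∀ j, t j ≤ a ^ 2 + (‖ζ j‖ ^ 2 - a ^ 2) / (‖ζ j - a‖) ^ 2 := by
      intro j
      have h1 : t j = a ^ 2 / (‖ζ j - a‖) ^ 2
          + (‖ζ j‖ ^ 2 - a ^ 2) / (‖ζ j - a‖) ^ 2 := by
        rw [htdef]
        simp only
        field_simp
        ring
      rw [h1]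
      have h2 : a ^ 2 / (‖ζ j - a‖) ^ 2 ≤ a ^ 2 := by
        have h3 : (1:ℝ) ≤ ‖ζ j - a‖ ^ 2 := by nlinarith [hζ j]
        rw [div_le_iff₀ (by nlinarith [hρpos j] : (0:ℝ) < ‖ζ j - a‖ ^ 2)]
        nlinarith [mul_nonneg (sq_nonneg a) (sub_nonneg.mpr h3)]
      linarith
    calc ∑ j, t j ≤ ∑ j, (a ^ 2 + (‖ζ j‖ ^ 2 - a ^ 2) / (‖ζ j - a‖) ^ 2) :=
          Finset.sum_le_sum fun j _ => hle j
      _ = 8 * a ^ 2 + (2 * T - 8) := by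
          rw [Finset.sum_add_distrib, hsumζ]
          simp
      _ = 8 * S := by rw [hSdef]; ring
  have hprodt : ∏ j, t j ≤ S ^ 8 := by
    have amgm := Real.geom_mean_le_arith_mean_weighted Finset.univ (fun _ => (1/8 : ℝ)) t
      (fun _ _ => by norm_num) (by norm_num [Finset.sum_const, Finset.card_univ])
      (fun j _ => htnonneg j)
    have hsum8 : ∑ j, (1/8 : ℝ) * t j ≤ S :=
      calc ∑ j, (1/8 : ℝ) * t j = (1/8 : ℝ) * ∑ j, t j := by rw [Finset.mul_sum]
        _ ≤ (1/8 : ℝ) * (8 * S) := mul_le_mul_of_nonneg_left htsum (by norm_num)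
        _ = S := by ring
    have h0 : (0:ℝ) ≤ ∏ j, t j ^ (1/8 : ℝ) :=
      Finset.prod_nonneg fun j _ => Real.rpow_nonneg (htnonneg j) _
    have hpow : (∏ j, t j ^ (1/8 : ℝ)) ^ (8:ℕ) = ∏ j, t j := by
      rw [← Finset.prod_pow]
      refine Finset.prod_congr rfl fun j _ => ?_
      rw [← Real.rpow_natCast (t j ^ (1/8:ℝ)) 8, ← Real.rpow_mul (htnonneg j)]
      norm_num
    calc ∏ j, t j = (∏ j, t j ^ (1/8 : ℝ)) ^ (8:ℕ) := hpow.symm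
      _ ≤ S ^ (8:ℕ) := pow_le_pow_left₀ h0 (le_trans amgm hsum8) 8
  have hρprodpos : 0 < ∏ j, ‖ζ j - a‖ := Finset.prod_pos fun j _ => hρpos j
  have hLnn : 0 ≤ ∏ j, ‖ζ j‖ := Finset.prod_nonneg fun j _ => norm_nonneg _
  have hsq : (∏ j, ‖ζ j‖) ^ 2 ≤ ((∏ j, ‖ζ j - a‖) * S ^ 4) ^ 2 := by
    have h1 : (∏ j, ‖ζ j‖) ^ 2
        = (∏ j, t j) * (∏ j, ‖ζ j - a‖) ^ 2 := by
      rw [← Finset.prod_pow, ← Finset.prod_pow, ← Finset.prod_mul_distrib]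
      refine Finset.prod_congr rfl fun j _ => ?_
      rw [htdef]
      simp only
      exact (div_mul_cancel₀ _ (ne_of_gt (pow_pos (hρpos j) 2))).symm
    rw [h1]
    have h2 : ((∏ j, ‖ζ j - a‖) * S ^ 4) ^ 2
        = S ^ 8 * (∏ j, ‖ζ j - a‖) ^ 2 := by ring
    rw [h2]
    exact mul_le_mul_of_nonneg_right hprodt (by positivity)
  have hRnn : 0 ≤ (∏ j, ‖ζ j - a‖) * S ^ 4 :=
    mul_nonneg hρprodpos.le (pow_nonneg hpos 4)
  have h := Real.sqrt_le_sqrt hsq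
  rwa [Real.sqrt_sq hLnn, Real.sqrt_sq hRnn] at h
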